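/- arXiv:2302.13686 — 3 statements merged into one kernel-verified Lean document; each statement's English description precedes it below -/
import Mathlib

section
/- Let A = (a_{ij})_{i,j∈I} be a generalized Cartan matrix (a_{ii} = 2, a_{ij} ∈ ℤ_{≤0} for i ≠ j, and a_{ij} = 0 if and only if a_{ji} = 0), let i ≠ j in I with a_{ij} = 0, and suppose q_i, q_j ∈ ℂ^× are not roots of unity. Suppose φ_i = β_i^+ y_i + φ_{i,0} + β_i^- y_i^{-1} with φ_{i,0} ∈ 𝒜_{x_i} and φ_j = β_j^+ y_j + φ_{j,0} + β_j^- y_j^{-1} with φ_{j,0} ∈ 𝒜_{x_j}, where β_k^± = −q_k^{±1}·(q_k − q_k^{-1})^{-2}, and suppose φ_i φ_j = ζ_j^{-1}(φ_i)·ζ_i^{-1}(φ_j). Then both φ_{i,0} and φ_{j,0} lie in 𝒜_{x_i} ∩ 𝒜_{x_j}. -/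
noncomputable section

/-- The Laurent polynomial algebra `ℂ[x_i^{±1} : i ∈ ι]`, realized as the group algebra of the
free abelian group `ι → ℤ` over `ℂ` (for `ι` finite this is `ℤ^ι`). -/
abbrev LaurentAlg (ι : Type*) : Type _ := AddMonoidAlgebra ℂ (ι → ℤ)

/-- The monomial `∏_i x_i^{μ i}`. -/
def mono {ι : Type*} (μ : ι → ℤ) : LaurentAlg ι := AddMonoidAlgebra.single μ 1

lemma mono_zero {ι : Type*} : mono (0 : ι → ℤ) = 1 := rfl

lemma mono_add {ι : Type*} (μ ν : ι → ℤ) : mono (μ + ν) = mono μ * mono ν := by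
  simp [mono, AddMonoidAlgebra.single_mul_single]

/-- The auxiliary monoid homomorphism `μ ↦ c^{-μ i} · x^μ` underlying `ζ_i`. -/
def zetaHom {ι : Type*} (c : ℂˣ) (i : ι) : Multiplicative (ι → ℤ) →* LaurentAlg ι where
  toFun μ := ((c ^ (-(Multiplicative.toAdd μ i)) : ℂˣ) : ℂ) • mono (Multiplicative.toAdd μ)
  map_one' := by
    simp [mono_zero]
  map_mul' μ ν := by
    show ((c ^ (-(Multiplicative.toAdd (μ * ν) i)) : ℂˣ) : ℂ) • mono (Multiplicative.toAdd (μ * ν)) = _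
    have h : Multiplicative.toAdd (μ * ν) = Multiplicative.toAdd μ + Multiplicative.toAdd ν := rfl
    rw [h, mono_add, Pi.add_apply, neg_add, zpow_add, Units.val_mul, mul_smul,
      smul_mul_assoc, mul_smul_comm]

/-- The `ℂ`-algebra endomorphism `ζ_i` of the Laurent polynomial algebra determined by
`ζ_i(x_j) = c^{-δ_{ij}} x_j` (its inverse automorphism is `zeta c⁻¹ i`). -/
def zeta {ι : Type*} (c : ℂˣ) (i : ι) : LaurentAlg ι →ₐ[ℂ] LaurentAlg ι :=
  AddMonoidAlgebra.lift ℂ (LaurentAlg ι) (ι → ℤ) (zetaHom c i)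

/-- The element `{u}_s = (u - u⁻¹)/(s - s⁻¹)` for the unit `u = c · x^μ` of the Laurent
polynomial algebra (whose inverse is `c⁻¹ · x^{-μ}`). -/
def brk {ι : Type*} (s c : ℂ) (μ : ι → ℤ) : LaurentAlg ι :=
  ((s - s⁻¹)⁻¹ : ℂ) • (c • mono μ - c⁻¹ • mono (-μ))

/-- The shiftability system (4.1) for the integer matrix `a` with parameters `q i`:
`ζ_i(φ_i) − φ_i = {y_i}_i` for all `i`, and `φ_i φ_j = ζ_j^{-1}(φ_i)·ζ_i^{-1}(φ_j)` for `i ≠ j`,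
where `y_i = ∏_j x_j^{a j i}`. -/
def ShiftSystem {ι : Type*} (a : ι → ι → ℤ) (q : ι → ℂˣ) (φ : ι → LaurentAlg ι) : Prop :=
  (∀ i, zeta (q i) i (φ i) - φ i = brk ((q i : ℂ)) 1 (fun j => a j i)) ∧
  (∀ i j, i ≠ j → φ i * φ j = zeta (q j)⁻¹ j (φ i) * zeta (q i)⁻¹ i (φ j))

/-- The exponent vector of the single variable `x_k`. -/
def xvec {ι : Type*} [DecidableEq ι] (k : ι) : ι → ℤ := fun j => if j = k then 1 else 0

end

noncomputable section

/-- The decomposition `β_k⁺·y_k + φ_0 + β_k⁻·y_k⁻¹` of Lemma A.1,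
with `β_k^± = −q_k^{±1}(q_k − q_k⁻¹)⁻²`. -/
def phiDecomp {ι : Type*} (a : ι → ι → ℤ) (q : ℂˣ) (k : ι) (φ₀ : LaurentAlg ι) :
    LaurentAlg ι :=
  (-(q : ℂ) * (((q : ℂ) - (q : ℂ)⁻¹) ^ 2)⁻¹) • mono (fun l => a l k) + φ₀ +
    (-(q : ℂ)⁻¹ * (((q : ℂ) - (q : ℂ)⁻¹) ^ 2)⁻¹) • mono (-(fun l => a l k))


open Pointwise

lemma zeta_single' {ι : Type*} (c : ℂˣ) (k : ι) (μ : ι → ℤ) (r : ℂ) :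
    zeta c k (AddMonoidAlgebra.single μ r) =
      AddMonoidAlgebra.single μ (((c : ℂ) ^ (-(μ k))) * r) := by
  rw [zeta, AddMonoidAlgebra.lift_single]
  show r • (((c ^ (-(μ k)) : ℂˣ) : ℂ) • mono μ) = _
  rw [mono, smul_smul, Units.val_zpow_eq_zpow_val]
  simp [Finsupp.smul_single, AddMonoidAlgebra.smul_single, mul_comm]

lemma zeta_apply' {ι : Type*} (c : ℂˣ) (k : ι) (h : LaurentAlg ι) (lam : ι → ℤ) :
    (zeta c k h).coeff lam = ((c : ℂ) ^ (-(lam k))) * h.coeff lam := by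
  induction h using AddMonoidAlgebra.induction_linear with
  | zero => simp
  | add f g hf hg =>
      rw [map_add]
      show (zeta c k f + zeta c k g : LaurentAlg ι).coeff lam = _
      rw [AddMonoidAlgebra.coeff_add, Finsupp.add_apply, hf, hg]
      show _ = _ * (f.coeff lam + g.coeff lam)
      ring
  | single μ r =>
      rw [zeta_single']
      rcases eq_or_ne μ lam with rfl | hne
      · simp
      · show Finsupp.single μ _ lam = _ * Finsupp.single μ r lam
        rw [Finsupp.single_eq_of_ne' hne, Finsupp.single_eq_of_ne' hne, mul_zero]

lemma mul_apply_eq_zero' {ι : Type*} [Fintype ι] [DecidableEq ι]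
    (f g : LaurentAlg ι) (lam : ι → ℤ)
    (h : ∀ μ ∈ f.coeff.support, ∀ ν ∈ g.coeff.support, μ + ν ≠ lam) : (f * g).coeff lam = 0 := by
  by_contra hne
  obtain ⟨μ, hμ, ν, hν, hsum⟩ :=
    Finset.mem_add.mp (AddMonoidAlgebra.support_coeff_mul_subset f g (Finsupp.mem_support_iff.mpr hne))
  exact h μ hμ ν hν hsum

lemma unit_zpow_ne_one' (q : ℂˣ) (hq : ∀ m : ℕ, 0 < m → q ^ m ≠ 1) :
    ∀ n : ℤ, n ≠ 0 → (q : ℂ) ^ n ≠ 1 := by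
  intro n hn
  have hu : q ^ n ≠ 1 := by
    obtain ⟨m, rfl | rfl⟩ := n.eq_nat_or_neg
    · rw [zpow_natCast]
      exact hq m (by omega)
    · rw [zpow_neg, zpow_natCast, ne_eq, inv_eq_one]
      exact hq m (by omega)
  intro hc
  exact hu (Units.ext (by rw [Units.val_zpow_eq_zpow_val, Units.val_one]; exact hc))

lemma smul_mono' {ι : Type*} (c : ℂ) (μ : ι → ℤ) :
    c • mono μ = AddMonoidAlgebra.single μ c := by
  simp [mono, Finsupp.smul_single]

lemma aux_disconnected {ι : Type*} [Fintype ι] [DecidableEq ι]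
    (a : ι → ι → ℤ) (i j : ι)
    (haii : a i i = 2) (haji : a j i = 0) (haij : a i j = 0)
    (qi qj : ℂˣ) (hqi : ∀ m : ℕ, 0 < m → qi ^ m ≠ 1)
    (φi0 φj0 : LaurentAlg ι)
    (hi0 : ∀ μ ∈ φi0.coeff.support, μ i = 0)
    (hprod : phiDecomp a qi i φi0 * phiDecomp a qj j φj0 =
      zeta qj⁻¹ j (phiDecomp a qi i φi0) * zeta qi⁻¹ i (phiDecomp a qj j φj0)) :
    ∀ ν ∈ φj0.coeff.support, ν i = 0 := by
  by_contra hcon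
  push_neg at hcon
  obtain ⟨ν₁, hν₁mem, hν₁⟩ := hcon
  have hSne : φj0.coeff.support.Nonempty := ⟨ν₁, hν₁mem⟩
  obtain ⟨ν₀, hν₀mem, hν₀⟩ := φj0.coeff.support.exists_mem_eq_sup' hSne (fun ν => |ν i|)
  set N : ℤ := φj0.coeff.support.sup' hSne (fun ν => |ν i|) with hNdef
  have hbound : ∀ ν ∈ φj0.coeff.support, |ν i| ≤ N := by
    intro ν hν; rw [hNdef]; exact Finset.le_sup' (fun ν : ι → ℤ => |ν i|) hν
  have hNpos : 0 < N := lt_of_lt_of_le (abs_pos.mpr hν₁) (hbound _ hν₁mem)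
  clear hNdef
  have hzpow := unit_zpow_ne_one' qi hqi
  have hqine : (qi : ℂ) ≠ 0 := qi.ne_zero
  have hq2 : (qi : ℂ) - (qi : ℂ)⁻¹ ≠ 0 := by
    intro h
    refine hzpow 2 (by norm_num) ?_
    have h1 : (qi : ℂ) = (qi : ℂ)⁻¹ := sub_eq_zero.mp h
    calc (qi:ℂ) ^ (2:ℤ) = (qi:ℂ) * (qi:ℂ) := by rw [zpow_two]
    _ = (qi:ℂ) * (qi:ℂ)⁻¹ := by rw [← h1]
    _ = 1 := mul_inv_cancel₀ hqine
  set cp : ℂ := -(qi : ℂ) * (((qi : ℂ) - (qi : ℂ)⁻¹) ^ 2)⁻¹ with hcp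
  set cm : ℂ := -(qi : ℂ)⁻¹ * (((qi : ℂ) - (qi : ℂ)⁻¹) ^ 2)⁻¹ with hcm
  have hcpne : cp ≠ 0 :=
    mul_ne_zero (neg_ne_zero.mpr hqine) (inv_ne_zero (pow_ne_zero 2 hq2))
  have hcmne : cm ≠ 0 :=
    mul_ne_zero (neg_ne_zero.mpr (inv_ne_zero hqine)) (inv_ne_zero (pow_ne_zero 2 hq2))
  set α : ι → ℤ := fun l => a l i with hα
  set αj : ι → ℤ := fun l => a l j with hαj
  set f : LaurentAlg ι := phiDecomp a qi i φi0 with hf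
  set g : LaurentAlg ι := phiDecomp a qj j φj0 with hg
  set dp : ℂ := -(qj : ℂ) * (((qj : ℂ) - (qj : ℂ)⁻¹) ^ 2)⁻¹ with hdp
  set dm : ℂ := -(qj : ℂ)⁻¹ * (((qj : ℂ) - (qj : ℂ)⁻¹) ^ 2)⁻¹ with hdm
  clear_value N cp cm α αj f g dp dm
  have hgeq : g = AddMonoidAlgebra.single αj dp + φj0 + AddMonoidAlgebra.single (-αj) dm := by
    rw [hg, phiDecomp, smul_mono', smul_mono', hαj, hdp, hdm]
  have hαji : αj i = 0 := by rw [hαj]; exact haij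
  have hgval : ∀ ν : ι → ℤ, N < |ν i| → g.coeff ν = 0 := by
    intro ν hν
    have hν0 : ν i ≠ 0 := by
      intro h; rw [h] at hν; simp only [abs_zero] at hν; omega
    have h1 : αj ≠ ν := by
      intro h; exact hν0 (by rw [← congrFun h i]; exact hαji)
    have h2 : -αj ≠ ν := by
      intro h; apply hν0; rw [← congrFun h i]; show -(αj i) = 0; rw [hαji]; ring
    have h3 : φj0.coeff ν = 0 := by
      by_contra h
      exact absurd (hbound ν (Finsupp.mem_support_iff.mpr h)) (not_le.mpr hν)
    rw [hgeq]
    show (Finsupp.single αj dp + φj0.coeff + Finsupp.single (-αj) dm) ν = 0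
    rw [Finsupp.add_apply, Finsupp.add_apply, Finsupp.single_eq_of_ne' h1,
      Finsupp.single_eq_of_ne' h2, h3]
    ring
  have hgsupp : ∀ ν : ι → ℤ, g.coeff ν ≠ 0 → |ν i| ≤ N := by
    intro ν h; by_contra hb; exact h (hgval ν (not_le.mp hb))
  have habs : |ν₀ i| = N := hν₀.symm
  have hν₀i : ν₀ i ≠ 0 := by
    intro h; rw [h] at habs; simp only [abs_zero] at habs; omega
  have hgν₀ : g.coeff ν₀ = φj0.coeff ν₀ := by
    have h1 : αj ≠ ν₀ := by
      intro h; exact hν₀i (by rw [← congrFun h i]; exact hαji)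
    have h2 : -αj ≠ ν₀ := by
      intro h; apply hν₀i; rw [← congrFun h i]; show -(αj i) = 0; rw [hαji]; ring
    rw [hgeq]
    show (Finsupp.single αj dp + φj0.coeff + Finsupp.single (-αj) dm) ν₀ = _
    rw [Finsupp.add_apply, Finsupp.add_apply, Finsupp.single_eq_of_ne' h1,
      Finsupp.single_eq_of_ne' h2]
    ring
  have hφν₀ : φj0.coeff ν₀ ≠ 0 := Finsupp.mem_support_iff.mp hν₀mem
  set G : LaurentAlg ι := zeta qi⁻¹ i g with hG
  clear_value G
  have hGval : ∀ ν : ι → ℤ, G.coeff ν = ((qi:ℂ) ^ (ν i)) * g.coeff ν := by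
    intro ν
    rw [hG, zeta_apply']
    congr 1
    rw [Units.val_inv_eq_inv_val, inv_zpow, ← zpow_neg, neg_neg]
  have main : ∀ (w : ι → ℤ) (c c' : ℂ), c ≠ 0 → w j = 0 →
      f = AddMonoidAlgebra.single w c + φi0 + AddMonoidAlgebra.single (-w) c' →
      |(w + ν₀) i| = N + 2 → |(w + w + ν₀) i| = N + 4 → False := by
    intro w c c' hc hwj hfw habs1 habs2
    set lam : ι → ℤ := w + ν₀ with hlam
    have e1 : -w + lam = ν₀ := by rw [hlam]; abel
    have e2 : -(-w) + lam = w + w + ν₀ := by rw [hlam]; abel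
    have hg2 : g.coeff (w + w + ν₀) = 0 := hgval _ (by rw [habs2]; omega)
    have hL : (f * g).coeff lam = c * φj0.coeff ν₀ := by
      rw [hfw, add_mul, add_mul]
      show ((AddMonoidAlgebra.single w c * g + φi0 * g) +
        AddMonoidAlgebra.single (-w) c' * g : LaurentAlg ι).coeff lam = _
      rw [AddMonoidAlgebra.coeff_add, AddMonoidAlgebra.coeff_add, Finsupp.add_apply, Finsupp.add_apply,
        AddMonoidAlgebra.coeff_single_mul_apply, AddMonoidAlgebra.coeff_single_mul_apply, e1, e2, hgν₀, hg2]
      have hmid : (φi0 * g).coeff lam = 0 := by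
        apply mul_apply_eq_zero'
        intro μ hμ ν hν hsum
        have h1 : lam i = ν i := by
          rw [← hsum]; show μ i + ν i = ν i; rw [hi0 μ hμ]; ring
        have h2 : |ν i| ≤ N := hgsupp ν (Finsupp.mem_support_iff.mp hν)
        rw [← h1, habs1] at h2
        omega
      rw [hmid]
      ring
    have hz1 : zeta qj⁻¹ j (AddMonoidAlgebra.single w c) = AddMonoidAlgebra.single w c := by
      rw [zeta_single', hwj]; norm_num
    have hz2 : zeta qj⁻¹ j (AddMonoidAlgebra.single (-w) c') =
        AddMonoidAlgebra.single (-w) c' := by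
      rw [zeta_single']
      have : (-w) j = 0 := by show -(w j) = 0; rw [hwj]; ring
      rw [this]; norm_num
    have hFeq : zeta qj⁻¹ j f =
        AddMonoidAlgebra.single w c + zeta qj⁻¹ j φi0 + AddMonoidAlgebra.single (-w) c' := by
      rw [hfw, map_add, map_add, hz1, hz2]
    have hR : (zeta qj⁻¹ j f * G).coeff lam = c * ((qi:ℂ) ^ (ν₀ i) * φj0.coeff ν₀) := by
      rw [hFeq, add_mul, add_mul]
      show ((AddMonoidAlgebra.single w c * G + zeta qj⁻¹ j φi0 * G) +
        AddMonoidAlgebra.single (-w) c' * G : LaurentAlg ι).coeff lam = _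
      rw [AddMonoidAlgebra.coeff_add, AddMonoidAlgebra.coeff_add, Finsupp.add_apply, Finsupp.add_apply,
        AddMonoidAlgebra.coeff_single_mul_apply, AddMonoidAlgebra.coeff_single_mul_apply, e1, e2,
        hGval ν₀, hGval (w + w + ν₀), hgν₀, hg2]
      have hmid : (zeta qj⁻¹ j φi0 * G).coeff lam = 0 := by
        apply mul_apply_eq_zero'
        intro μ hμ ν hν hsum
        have hμ' : μ i = 0 := by
          apply hi0
          rw [Finsupp.mem_support_iff] at hμ ⊢
          intro h0
          rw [zeta_apply', h0, mul_zero] at hμ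
          exact hμ rfl
        have hν' : g.coeff ν ≠ 0 := by
          rw [Finsupp.mem_support_iff, hGval] at hν
          exact right_ne_zero_of_mul hν
        have h1 : lam i = ν i := by
          rw [← hsum]; show μ i + ν i = ν i; rw [hμ']; ring
        have h2 : |ν i| ≤ N := hgsupp ν hν'
        rw [← h1, habs1] at h2
        omega
      rw [hmid]
      ring
    have hco : (f * g).coeff lam = (zeta qj⁻¹ j f * G).coeff lam := by
      rw [hprod]
    rw [hL, hR] at hco
    have h1 : φj0.coeff ν₀ = (qi:ℂ) ^ (ν₀ i) * φj0.coeff ν₀ := mul_left_cancel₀ hc hco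
    have h2 : (1:ℂ) * φj0.coeff ν₀ = (qi:ℂ) ^ (ν₀ i) * φj0.coeff ν₀ := by rw [one_mul]; exact h1
    exact hzpow (ν₀ i) hν₀i (mul_right_cancel₀ hφν₀ h2).symm
  have hαi : α i = 2 := by rw [hα]; exact haii
  have hαjz : α j = 0 := by rw [hα]; exact haji
  rcases (abs_eq hNpos.le).mp habs with hpos | hneg
  · refine main α cp cm hcpne hαjz ?_ ?_ ?_
    · rw [hf, phiDecomp, smul_mono', smul_mono', hα, hcp, hcm]
    · have h : (α + ν₀) i = N + 2 := by
        show α i + ν₀ i = N + 2; rw [hαi, hpos]; ring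
      rw [h, abs_of_pos (by omega)]
    · have h : (α + α + ν₀) i = N + 4 := by
        show α i + α i + ν₀ i = N + 4; rw [hαi, hpos]; ring
      rw [h, abs_of_pos (by omega)]
  · refine main (-α) cm cp hcmne ?_ ?_ ?_ ?_
    · show -(α j) = 0; rw [hαjz]; ring
    · rw [hf, phiDecomp, smul_mono', smul_mono', hα, hcp, hcm, neg_neg]
      abel
    · have h : (-α + ν₀) i = -(N + 2) := by
        show -(α i) + ν₀ i = -(N + 2); rw [hαi, hneg]; ring
      rw [h, abs_neg, abs_of_pos (by omega)]
    · have h : (-α + -α + ν₀) i = -(N + 4) := by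
        show -(α i) + -(α i) + ν₀ i = -(N + 4); rw [hαi, hneg]; ring
      rw [h, abs_neg, abs_of_pos (by omega)]

/-- Lemma A.2: for a generalized Cartan matrix with `a_{ij} = 0` (`i ≠ j`),
if `φ_i = β_i⁺y_i + φ_{i,0} + β_i⁻y_i⁻¹` with `φ_{i,0} ∈ 𝒜_{x_i}`, similarly for `φ_j`,
and `φ_iφ_j = ζ_j⁻¹(φ_i)·ζ_i⁻¹(φ_j)`, then `φ_{i,0}, φ_{j,0} ∈ 𝒜_{x_i} ∩ 𝒜_{x_j}`. -/
theorem disconnected_constant_terms {ι : Type*} [Fintype ι] [DecidableEq ι]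
    (a : ι → ι → ℤ)
    (hdiag : ∀ k, a k k = 2) (hoff : ∀ k l, k ≠ l → a k l ≤ 0)
    (hzero_iff : ∀ k l, a k l = 0 ↔ a l k = 0)
    (i j : ι) (hij : i ≠ j) (hija : a i j = 0)
    (qi qj : ℂˣ) (hqi : ∀ m : ℕ, 0 < m → qi ^ m ≠ 1) (hqj : ∀ m : ℕ, 0 < m → qj ^ m ≠ 1)
    (φi0 φj0 : LaurentAlg ι)
    (hi0 : ∀ μ ∈ φi0.coeff.support, μ i = 0) (hj0 : ∀ μ ∈ φj0.coeff.support, μ j = 0)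
    (hprod : phiDecomp a qi i φi0 * phiDecomp a qj j φj0 =
      zeta qj⁻¹ j (phiDecomp a qi i φi0) * zeta qi⁻¹ i (phiDecomp a qj j φj0)) :
    (∀ μ ∈ φi0.coeff.support, μ i = 0 ∧ μ j = 0) ∧
      (∀ μ ∈ φj0.coeff.support, μ i = 0 ∧ μ j = 0) := by
  have haji : a j i = 0 := (hzero_iff i j).mp hija
  have h1 : ∀ ν ∈ φj0.coeff.support, ν i = 0 :=
    aux_disconnected a i j (hdiag i) haji hija qi qj hqi φi0 φj0 hi0 hprod
  have hprod' : phiDecomp a qj j φj0 * phiDecomp a qi i φi0 =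
      zeta qi⁻¹ i (phiDecomp a qj j φj0) * zeta qj⁻¹ j (phiDecomp a qi i φi0) := by
    rw [mul_comm, hprod, mul_comm]
  have h2 : ∀ μ ∈ φi0.coeff.support, μ j = 0 :=
    aux_disconnected a j i (hdiag j) hija haji qj qi hqj φj0 φi0 hj0 hprod'
  exact ⟨fun μ hμ => ⟨hi0 μ hμ, h2 μ hμ⟩, fun ν hν => ⟨h1 ν hν, hj0 ν hν⟩⟩

end
end

section
/- Let A = (a_{ij})_{i,j∈I} be a symmetrizable generalized Cartan matrix, with positive integers (e_k)_{k∈I} satisfying e_k a_{kl} = e_l a_{lk} for all k, l ∈ I, and set q_k = p^{e_k}. Let (φ_k)_{k∈I} be a solution of the shiftability system for A, and for each k write φ_k = β_k^+ y_k + φ_{k,0} + β_k^- y_k^{-1} with φ_{k,0} ∈ 𝒜_{x_k} and β_k^± = −q_k^{±1}·(q_k − q_k^{-1})^{-2} (such a decomposition exists and is unique). Suppose j ∈ I is connected to two distinct nodes i, l ∈ I \ {j} (that is, a_{ji} < 0 and a_{jl} < 0), and suppose φ_{j,0} ≠ 0. Then for every exponent vector μ ∈ ℤ^I in the support of φ_{j,0}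 (i.e. the monomial ∏_k x_k^{μ_k} occurs in φ_{j,0} with nonzero coefficient), one has μ_i · μ_l ≤ 0. -/
noncomputable section

namespace ShiftAux

open Finsupp

variable {ι : Type*}

lemma mono_apply [DecidableEq (ι → ℤ)] (μ γ : ι → ℤ) :
    (mono μ).coeff γ = if μ = γ then 1 else 0 := Finsupp.single_apply

lemma mul_apply_left' (f g : LaurentAlg ι) (x : ι → ℤ) :
    (f * g).coeff x = ∑ μ ∈ f.coeff.support, f.coeff μ * g.coeff (x - μ) := by
  classical
  rw [AddMonoidAlgebra.coeff_mul, Finsupp.sum]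
  refine Finset.sum_congr rfl fun μ hμ => ?_
  have h1 : ∀ a₂ : ι → ℤ, (μ + a₂ = x) ↔ (a₂ = x - μ) := fun a₂ => by
    constructor
    · intro h; rw [← h]; abel
    · intro h; rw [h]; abel
  calc (g.coeff.sum fun a₂ b₂ => if μ + a₂ = x then f.coeff μ * b₂ else 0)
      = g.coeff.sum fun a₂ b₂ => if a₂ = x - μ then f.coeff μ * b₂ else 0 := by
        refine Finset.sum_congr rfl fun a₂ _ => by beta_reduce; rw [h1 a₂]
    _ = f.coeff μ * g.coeff (x - μ) := by
        rw [Finsupp.sum_ite_eq']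
        split
        · rfl
        · next h => rw [Finsupp.notMem_support_iff.mp h, mul_zero]

lemma zeta_apply' (c : ℂˣ) (i : ι) (f : LaurentAlg ι) (γ : ι → ℤ) :
    (zeta c i f).coeff γ = ((c ^ (-(γ i)) : ℂˣ) : ℂ) * f.coeff γ := by
  classical
  rw [zeta, AddMonoidAlgebra.lift_apply]
  have hz : ∀ μ : ι → ℤ, zetaHom c i (Multiplicative.ofAdd μ)
      = ((c ^ (-(μ i)) : ℂˣ) : ℂ) • mono μ := fun μ => rfl
  rw [AddMonoidAlgebra.coeff_finsuppSum, Finsupp.sum_apply]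
  have : (f.coeff.sum fun μ b => (b • zetaHom c i (Multiplicative.ofAdd μ)).coeff γ)
      = f.coeff.sum fun μ b => if μ = γ then ((c ^ (-(μ i)) : ℂˣ) : ℂ) * b else 0 := by
    refine Finset.sum_congr rfl fun μ hμ => ?_
    beta_reduce; rw [hz, AddMonoidAlgebra.coeff_smul_apply, AddMonoidAlgebra.coeff_smul_apply, mono_apply]
    by_cases h : μ = γ <;> simp [h, mul_comm]
  rw [this, Finsupp.sum_ite_eq']
  split
  · rfl
  · next h => rw [Finsupp.notMem_support_iff.mp h, mul_zero]

lemma zeta_support (c : ℂˣ) (i : ι) (f : LaurentAlg ι) :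
    (zeta c i f).coeff.support = f.coeff.support := by
  ext γ
  simp only [Finsupp.mem_support_iff, zeta_apply']
  constructor
  · intro h hf; exact h (by rw [hf, mul_zero])
  · intro h; exact mul_ne_zero (Units.ne_zero _) h

end ShiftAux
namespace ShiftAux

variable {ι : Type*}

lemma unit_zpow_ne_one (p : ℂˣ) (hp : ∀ m : ℕ, 0 < m → p ^ m ≠ 1)
    {z : ℤ} (hz : z ≠ 0) : p ^ z ≠ 1 := by
  rcases lt_trichotomy z 0 with h | h | h
  · intro hone
    have h2 : p ^ (-z) = 1 := by
      have := congrArg (·⁻¹) hone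
      simpa [← zpow_neg] using this
    have h3 : (-z).toNat = -z := Int.toNat_of_nonneg (by omega)
    have := hp (-z).toNat (by omega)
    rw [← zpow_natCast, h3] at this
    exact this h2
  · exact absurd h hz
  · intro hone
    have h3 : z.toNat = z := Int.toNat_of_nonneg (by omega)
    have := hp z.toNat (by omega)
    rw [← zpow_natCast, h3] at this
    exact this hone

lemma one_sub_unit_zpow_ne (p : ℂˣ) (hp : ∀ m : ℕ, 0 < m → p ^ m ≠ 1)
    {z : ℤ} (hz : z ≠ 0) : (1 : ℂ) - ((p ^ z : ℂˣ) : ℂ) ≠ 0 := by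
  intro h
  have : ((p ^ z : ℂˣ) : ℂ) = ((1 : ℂˣ) : ℂ) := by
    have := sub_eq_zero.mp h
    simpa using this.symm
  exact unit_zpow_ne_one p hp hz (Units.ext this)

/-- Coefficient form of the second shiftability relation for the pair `(u, v)`. -/
lemma pair_coeff_eq [Fintype ι] (p : ℂˣ) (e : ι → ℕ) (φ : ι → LaurentAlg ι)
    (u v : ι)
    (hrel : φ u * φ v = zeta ((p ^ e v)⁻¹) v (φ u) * zeta ((p ^ e u)⁻¹) u (φ v))
    (x : ι → ℤ) :
    ∑ μ ∈ (φ u).coeff.support,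
      (φ u).coeff μ * (φ v).coeff (x - μ) *
        (1 - ((p ^ ((e v : ℤ) * μ v + (e u : ℤ) * (x - μ) u) : ℂˣ) : ℂ)) = 0 := by
  have hL : (φ u * φ v).coeff x = ∑ μ ∈ (φ u).coeff.support, (φ u).coeff μ * (φ v).coeff (x - μ) :=
    mul_apply_left' _ _ x
  have hR : (zeta ((p ^ e v)⁻¹) v (φ u) * zeta ((p ^ e u)⁻¹) u (φ v)).coeff x
      = ∑ μ ∈ (φ u).coeff.support,
          (φ u).coeff μ * (φ v).coeff (x - μ) *
            ((p ^ ((e v : ℤ) * μ v + (e u : ℤ) * (x - μ) u) : ℂˣ) : ℂ) := by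
    rw [mul_apply_left', zeta_support]
    refine Finset.sum_congr rfl fun μ hμ => ?_
    rw [zeta_apply', zeta_apply']
    have h1 : (((p ^ e v)⁻¹ ^ (-(μ v)) : ℂˣ) : ℂ) = ((p ^ ((e v : ℤ) * μ v) : ℂˣ) : ℂ) := by
      congr 1
      rw [inv_zpow, ← zpow_neg, neg_neg, ← zpow_natCast, ← zpow_mul]
    have h2 : (((p ^ e u)⁻¹ ^ (-((x - μ) u)) : ℂˣ) : ℂ)
        = ((p ^ ((e u : ℤ) * (x - μ) u) : ℂˣ) : ℂ) := by
      congr 1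
      rw [inv_zpow, ← zpow_neg, neg_neg, ← zpow_natCast, ← zpow_mul]
    rw [h1, h2, zpow_add, Units.val_mul]
    ring
  have h := hrel
  have hx := congrArg (fun f : LaurentAlg ι => f.coeff x) h
  beta_reduce at hx
  rw [hL, hR] at hx
  calc ∑ μ ∈ (φ u).coeff.support,
      (φ u).coeff μ * (φ v).coeff (x - μ) *
        (1 - ((p ^ ((e v : ℤ) * μ v + (e u : ℤ) * (x - μ) u) : ℂˣ) : ℂ))
      = (∑ μ ∈ (φ u).coeff.support, (φ u).coeff μ * (φ v).coeff (x - μ))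
        - ∑ μ ∈ (φ u).coeff.support,
            (φ u).coeff μ * (φ v).coeff (x - μ) *
              ((p ^ ((e v : ℤ) * μ v + (e u : ℤ) * (x - μ) u) : ℂˣ) : ℂ) := by
        rw [← Finset.sum_sub_distrib]
        exact Finset.sum_congr rfl fun μ _ => by ring
    _ = 0 := by rw [← hx]; exact sub_self _

end ShiftAux
namespace ShiftAux

variable {ι : Type*}

/-- The exponent vector of `y_k = ∏ x_m^{a m k}`. -/
def alphaV (a : ι → ι → ℤ) (k : ι) : ι → ℤ := fun m => a m k

lemma alphaV_apply (a : ι → ι → ℤ) (k m : ι) : alphaV a k m = a m k := rfl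

def betaP (q : ℂˣ) : ℂ := -(q : ℂ) * (((q : ℂ) - (q : ℂ)⁻¹) ^ 2)⁻¹

def betaM (q : ℂˣ) : ℂ := -(q : ℂ)⁻¹ * (((q : ℂ) - (q : ℂ)⁻¹) ^ 2)⁻¹

lemma q_sub_inv_ne (p : ℂˣ) (hp : ∀ m : ℕ, 0 < m → p ^ m ≠ 1) (n : ℕ) (hn : 0 < n) :
    ((p ^ n : ℂˣ) : ℂ) - ((p ^ n : ℂˣ) : ℂ)⁻¹ ≠ 0 := by
  intro h
  have hq0 : ((p ^ n : ℂˣ) : ℂ) ≠ 0 := Units.ne_zero _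
  have h1 : ((p ^ n : ℂˣ) : ℂ) = ((p ^ n : ℂˣ) : ℂ)⁻¹ := sub_eq_zero.mp h
  have h2 : ((p ^ n : ℂˣ) : ℂ) * ((p ^ n : ℂˣ) : ℂ) = 1 := by
    nth_rewrite 2 [h1]
    exact mul_inv_cancel₀ hq0
  have h3 : ((p ^ (n + n) : ℂˣ) : ℂ) = ((1 : ℂˣ) : ℂ) := by
    rw [pow_add, Units.val_mul, Units.val_one]; exact h2
  exact hp (n + n) (by omega) (Units.ext h3)

lemma betaP_ne (p : ℂˣ) (hp : ∀ m : ℕ, 0 < m → p ^ m ≠ 1) (n : ℕ) (hn : 0 < n) :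
    betaP (p ^ n) ≠ 0 := by
  have h1 := q_sub_inv_ne p hp n hn
  have hq0 : ((p ^ n : ℂˣ) : ℂ) ≠ 0 := Units.ne_zero _
  exact mul_ne_zero (neg_ne_zero.mpr hq0) (inv_ne_zero (pow_ne_zero 2 h1))

lemma betaM_ne (p : ℂˣ) (hp : ∀ m : ℕ, 0 < m → p ^ m ≠ 1) (n : ℕ) (hn : 0 < n) :
    betaM (p ^ n) ≠ 0 := by
  have h1 := q_sub_inv_ne p hp n hn
  have hq0 : ((p ^ n : ℂˣ) : ℂ) ≠ 0 := Units.ne_zero _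
  exact mul_ne_zero (neg_ne_zero.mpr (inv_ne_zero hq0)) (inv_ne_zero (pow_ne_zero 2 h1))

lemma phi_apply [Fintype ι] [DecidableEq ι] (a : ι → ι → ℤ) (e : ι → ℕ) (p : ℂˣ)
    (φ φ₀ : ι → LaurentAlg ι)
    (hdec : ∀ k, φ k = phiDecomp a (p ^ (e k)) k (φ₀ k)) (k : ι) (γ : ι → ℤ) :
    (φ k).coeff γ = betaP (p ^ e k) * (if alphaV a k = γ then 1 else 0) + (φ₀ k).coeff γ
      + betaM (p ^ e k) * (if -alphaV a k = γ then 1 else 0) := by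
  classical
  rw [hdec k]
  show (_ • mono (alphaV a k) + φ₀ k + _ • mono (-alphaV a k)).coeff γ = _
  rw [AddMonoidAlgebra.coeff_add, AddMonoidAlgebra.coeff_add, Finsupp.add_apply, Finsupp.add_apply,
    AddMonoidAlgebra.coeff_smul_apply, AddMonoidAlgebra.coeff_smul_apply,
    mono_apply, mono_apply]
  simp only [smul_eq_mul, betaP, betaM]

lemma phi0_eq_zero (φ₀ : ι → LaurentAlg ι)
    (hconst : ∀ k, ∀ μ ∈ (φ₀ k).coeff.support, μ k = 0)
    (k : ι) (γ : ι → ℤ) (h : γ k ≠ 0) : (φ₀ k).coeff γ = 0 := by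
  by_contra h0
  exact h (hconst k γ (Finsupp.mem_support_iff.mpr h0))

section Decomp

variable [Fintype ι] [DecidableEq ι] {a : ι → ι → ℤ} {e : ι → ℕ} {p : ℂˣ}
  {φ φ₀ : ι → LaurentAlg ι}
  (hdiag : ∀ k, a k k = 2)
  (hconst : ∀ k, ∀ μ ∈ (φ₀ k).coeff.support, μ k = 0)
  (hdec : ∀ k, φ k = phiDecomp a (p ^ (e k)) k (φ₀ k))

include hdiag hconst hdec

lemma phi_coeff_top (k : ι) : (φ k).coeff (alphaV a k) = betaP (p ^ e k) := by
  rw [phi_apply a e p φ φ₀ hdec k]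
  have h1 : (φ₀ k).coeff (alphaV a k) = 0 :=
    phi0_eq_zero φ₀ hconst k _ (by rw [alphaV_apply, hdiag k]; omega)
  have h2 : ¬(-alphaV a k = alphaV a k) := by
    intro h
    have := congrFun h k
    simp only [Pi.neg_apply, alphaV_apply, hdiag k] at this
    omega
  rw [h1, if_pos rfl, if_neg h2]
  ring

lemma phi_coeff_bot (k : ι) : (φ k).coeff (-alphaV a k) = betaM (p ^ e k) := by
  rw [phi_apply a e p φ φ₀ hdec k]
  have h1 : (φ₀ k).coeff (-alphaV a k) = 0 :=
    phi0_eq_zero φ₀ hconst k _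
      (by simp only [Pi.neg_apply, alphaV_apply, hdiag k]; omega)
  have h2 : ¬(alphaV a k = -alphaV a k) := by
    intro h
    have := congrFun h k
    simp only [Pi.neg_apply, alphaV_apply, hdiag k] at this
    omega
  rw [h1, if_pos rfl, if_neg h2]
  ring

omit hdiag hconst in
lemma phi_coeff_other (k : ι) (γ : ι → ℤ) (h1 : γ ≠ alphaV a k) (h2 : γ ≠ -alphaV a k) :
    (φ k).coeff γ = (φ₀ k).coeff γ := by
  rw [phi_apply a e p φ φ₀ hdec k, if_neg (fun h => h1 h.symm), if_neg (fun h => h2 h.symm)]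
  ring

omit hdiag hconst in
lemma phi_supp_cases (k : ι) (γ : ι → ℤ) (h : (φ k).coeff γ ≠ 0) :
    γ = alphaV a k ∨ γ = -alphaV a k ∨ γ ∈ (φ₀ k).coeff.support := by
  by_cases h1 : γ = alphaV a k
  · exact Or.inl h1
  by_cases h2 : γ = -alphaV a k
  · exact Or.inr (Or.inl h2)
  refine Or.inr (Or.inr (Finsupp.mem_support_iff.mpr ?_))
  rw [← phi_coeff_other hdec k γ h1 h2]
  exact h

omit hdiag hconst in
lemma phi_supp_subset (k : ι) :
    (φ k).coeff.support ⊆ insert (alphaV a k) (insert (-alphaV a k) (φ₀ k).coeff.support) := by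
  intro γ hγ
  rcases phi_supp_cases hdec k γ (Finsupp.mem_support_iff.mp hγ) with h | h | h
  · rw [h]; exact Finset.mem_insert_self _ _
  · rw [h]; exact Finset.mem_insert_of_mem (Finset.mem_insert_self _ _)
  · exact Finset.mem_insert_of_mem (Finset.mem_insert_of_mem h)

end Decomp

end ShiftAux
namespace ShiftAux

variable {ι : Type*} [Fintype ι] [DecidableEq ι]

/-- The master "anchor" identity: the coefficient equation of the pair relation `(u,v)`
at an exponent `x`, with the sum split according to the decomposition of `φ_u`. -/
lemma anchor_sum {a : ι → ι → ℤ} {e : ι → ℕ} {p : ℂˣ} {φ φ₀ : ι → LaurentAlg ι}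
    (hdiag : ∀ k, a k k = 2)
    (hconst : ∀ k, ∀ μ ∈ (φ₀ k).coeff.support, μ k = 0)
    (hdec : ∀ k, φ k = phiDecomp a (p ^ (e k)) k (φ₀ k))
    (u v : ι)
    (hrel : φ u * φ v = zeta ((p ^ e v)⁻¹) v (φ u) * zeta ((p ^ e u)⁻¹) u (φ v))
    (x : ι → ℤ) :
    betaP (p ^ e u) * (φ v).coeff (x - alphaV a u) *
        (1 - ((p ^ ((e v : ℤ) * a v u + (e u : ℤ) * ((x - alphaV a u) u)) : ℂˣ) : ℂ))
      + betaM (p ^ e u) * (φ v).coeff (x + alphaV a u) *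
        (1 - ((p ^ ((e v : ℤ) * (-a v u) + (e u : ℤ) * ((x + alphaV a u) u)) : ℂˣ) : ℂ))
      + ∑ μ ∈ (φ₀ u).coeff.support, (φ₀ u).coeff μ * (φ v).coeff (x - μ) *
          (1 - ((p ^ ((e v : ℤ) * μ v + (e u : ℤ) * ((x - μ) u)) : ℂˣ) : ℂ)) = 0 := by
  classical
  have h0 := pair_coeff_eq p e φ u v hrel x
  set F : (ι → ℤ) → ℂ := fun μ =>
    (φ u).coeff μ * (φ v).coeff (x - μ) *
      (1 - ((p ^ ((e v : ℤ) * μ v + (e u : ℤ) * ((x - μ) u)) : ℂˣ) : ℂ)) with hF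
  have hne1 : alphaV a u ≠ -alphaV a u := by
    intro h
    have := congrFun h u
    simp only [Pi.neg_apply, alphaV_apply, hdiag u] at this
    omega
  have hnotin1 : alphaV a u ∉ (φ₀ u).coeff.support := by
    intro h
    have := hconst u _ h
    rw [alphaV_apply, hdiag u] at this
    omega
  have hnotin2 : -alphaV a u ∉ (φ₀ u).coeff.support := by
    intro h
    have := hconst u _ h
    simp only [Pi.neg_apply, alphaV_apply, hdiag u] at this
    omega
  have hU : ∑ μ ∈ insert (alphaV a u) (insert (-alphaV a u) (φ₀ u).coeff.support), F μ = 0 := by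
    rw [← Finset.sum_subset (phi_supp_subset hdec u)
      (fun μ _ hμ => by
        rw [hF]
        simp only
        rw [Finsupp.notMem_support_iff.mp hμ, zero_mul, zero_mul])]
    exact h0
  rw [Finset.sum_insert (by
      simp only [Finset.mem_insert]
      exact fun h => h.elim (fun h1 => hne1 h1) (fun h1 => hnotin1 h1)),
    Finset.sum_insert hnotin2] at hU
  have e1 : F (alphaV a u) = betaP (p ^ e u) * (φ v).coeff (x - alphaV a u) *
      (1 - ((p ^ ((e v : ℤ) * a v u + (e u : ℤ) * ((x - alphaV a u) u)) : ℂˣ) : ℂ)) := by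
    rw [hF]
    simp only
    rw [phi_coeff_top hdiag hconst hdec u, alphaV_apply]
  have e2 : F (-alphaV a u) = betaM (p ^ e u) * (φ v).coeff (x + alphaV a u) *
      (1 - ((p ^ ((e v : ℤ) * (-a v u) + (e u : ℤ) * ((x + alphaV a u) u)) : ℂˣ) : ℂ)) := by
    rw [hF]
    simp only
    rw [phi_coeff_bot hdiag hconst hdec u, sub_neg_eq_add, Pi.neg_apply, alphaV_apply]
  have e3 : ∑ μ ∈ (φ₀ u).coeff.support, F μ
      = ∑ μ ∈ (φ₀ u).coeff.support, (φ₀ u).coeff μ * (φ v).coeff (x - μ) *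
          (1 - ((p ^ ((e v : ℤ) * μ v + (e u : ℤ) * ((x - μ) u)) : ℂˣ) : ℂ)) := by
    refine Finset.sum_congr rfl fun μ hμ => ?_
    rw [hF]
    simp only
    rw [phi_coeff_other hdec u μ]
    · intro h
      have := congrFun h u
      rw [hconst u μ hμ, alphaV_apply, hdiag u] at this
      omega
    · intro h
      have := congrFun h u
      simp only [Pi.neg_apply, alphaV_apply, hdiag u] at this
      rw [hconst u μ hμ] at this
      omega
  rw [e1, e2, e3] at hU
  rw [← add_assoc] at hU
  exact hU

end ShiftAux
namespace ShiftAux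

variable {ι : Type*} [Fintype ι] [DecidableEq ι]

lemma phi_eq_zero_of {a : ι → ι → ℤ} {e : ι → ℕ} {p : ℂˣ} {φ φ₀ : ι → LaurentAlg ι}
    (hdec : ∀ k, φ k = phiDecomp a (p ^ (e k)) k (φ₀ k))
    (s : ι) (γ : ι → ℤ) (h1 : γ ≠ alphaV a s) (h2 : γ ≠ -alphaV a s)
    (h3 : γ ∉ (φ₀ s).coeff.support) : (φ s).coeff γ = 0 := by
  by_contra h
  rcases phi_supp_cases hdec s γ h with h' | h' | h'
  · exact h1 h'
  · exact h2 h'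
  · exact h3 h'

/-- Lemma B (upper half): every exponent in the support of `φ₀ s` has `t`-coordinate
at most `-a t s`. -/
lemma box_upper {a : ι → ι → ℤ} {e : ι → ℕ} {p : ℂˣ} {φ φ₀ : ι → LaurentAlg ι}
    (hdiag : ∀ k, a k k = 2) (hoff : ∀ k l, k ≠ l → a k l ≤ 0)
    (he : ∀ k, 0 < e k)
    (hsym : ∀ k l, (e k : ℤ) * a k l = (e l : ℤ) * a l k)
    (hp : ∀ m : ℕ, 0 < m → p ^ m ≠ 1)
    (hconst : ∀ k, ∀ μ ∈ (φ₀ k).coeff.support, μ k = 0)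
    (hdec : ∀ k, φ k = phiDecomp a (p ^ (e k)) k (φ₀ k))
    (s t : ι) (hts : t ≠ s)
    (hrel : φ t * φ s = zeta ((p ^ e s)⁻¹) s (φ t) * zeta ((p ^ e t)⁻¹) t (φ s)) :
    ∀ κ ∈ (φ₀ s).coeff.support, κ t ≤ -a t s := by
  by_contra hcon
  push_neg at hcon
  obtain ⟨κ₀, hκ₀, hκ₀t⟩ := hcon
  obtain ⟨κ, hκ, hmax⟩ := Finset.exists_max_image (φ₀ s).coeff.support (fun κ => κ t) ⟨κ₀, hκ₀⟩
  have hats : a t s ≤ 0 := hoff t s hts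
  have hN : -a t s < κ t := lt_of_lt_of_le hκ₀t (hmax κ₀ hκ₀)
  have key := anchor_sum hdiag hconst hdec t s hrel (κ + alphaV a t)
  -- `x - α_t = κ`
  have hx1 : κ + alphaV a t - alphaV a t = κ := by abel
  -- second term vanishes
  have hT2 : (φ s).coeff (κ + alphaV a t + alphaV a t) = 0 := by
    refine phi_eq_zero_of hdec s _ ?_ ?_ ?_
    · intro h
      have := congrFun h t
      simp only [Pi.add_apply, alphaV_apply, hdiag t] at this
      omega
    · intro h
      have := congrFun h t
      simp only [Pi.add_apply, Pi.neg_apply, alphaV_apply, hdiag t] at this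
      omega
    · intro h
      have h1 := hmax _ h
      simp only [Pi.add_apply, alphaV_apply, hdiag t] at h1
      omega
  -- summands vanish
  have hS : ∀ μ ∈ (φ₀ t).coeff.support, (φ s).coeff (κ + alphaV a t - μ) = 0 := by
    intro μ hμ
    have hμt : μ t = 0 := hconst t μ hμ
    refine phi_eq_zero_of hdec s _ ?_ ?_ ?_
    · intro h
      have := congrFun h t
      simp only [Pi.sub_apply, Pi.add_apply, alphaV_apply, hdiag t, hμt] at this
      omega
    · intro h
      have := congrFun h t
      simp only [Pi.sub_apply, Pi.add_apply, Pi.neg_apply, alphaV_apply, hdiag t, hμt] at this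
      omega
    · intro h
      have h1 := hmax _ h
      simp only [Pi.sub_apply, Pi.add_apply, alphaV_apply, hdiag t, hμt] at h1
      omega
  rw [hx1] at key
  have hsum0 : ∑ μ ∈ (φ₀ t).coeff.support, (φ₀ t).coeff μ * (φ s).coeff (κ + alphaV a t - μ) *
      (1 - ((p ^ ((e s : ℤ) * μ s + (e t : ℤ) * ((κ + alphaV a t - μ) t)) : ℂˣ) : ℂ)) = 0 := by
    refine Finset.sum_eq_zero fun μ hμ => ?_
    rw [hS μ hμ, mul_zero, zero_mul]
  rw [hT2, hsum0] at key
  simp only [mul_zero, zero_mul, add_zero] at key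
  -- now `key : betaP * (φ₀ s).coeff κ * (1 - p^E) = 0` with all three factors nonzero
  have hφκ : (φ s).coeff κ = (φ₀ s).coeff κ := by
    refine phi_coeff_other hdec s κ ?_ ?_
    · intro h
      have := congrFun h s
      rw [hconst s κ hκ, alphaV_apply, hdiag s] at this
      omega
    · intro h
      have := congrFun h s
      simp only [Pi.neg_apply, alphaV_apply, hdiag s] at this
      rw [hconst s κ hκ] at this
      omega
  have hE : (e s : ℤ) * a s t + (e t : ℤ) * κ t ≠ 0 := by
    rw [hsym s t]
    have h1 : (0 : ℤ) < (e t : ℤ) := Int.natCast_pos.mpr (he t)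
    have : (e t : ℤ) * a t s + (e t : ℤ) * κ t = (e t : ℤ) * (a t s + κ t) := by ring
    rw [this]
    exact ne_of_gt (mul_pos h1 (by omega))
  rw [hφκ] at key
  rcases mul_eq_zero.mp key with h | h
  · rcases mul_eq_zero.mp h with h' | h'
    · exact betaP_ne p hp (e t) (he t) h'
    · exact Finsupp.mem_support_iff.mp hκ h'
  · exact one_sub_unit_zpow_ne p hp hE h

end ShiftAux
namespace ShiftAux

variable {ι : Type*} [Fintype ι] [DecidableEq ι]

/-- Lemma B (lower half): every exponent in the support of `φ₀ s` has `t`-coordinate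
at least `a t s`. -/
lemma box_lower {a : ι → ι → ℤ} {e : ι → ℕ} {p : ℂˣ} {φ φ₀ : ι → LaurentAlg ι}
    (hdiag : ∀ k, a k k = 2) (hoff : ∀ k l, k ≠ l → a k l ≤ 0)
    (he : ∀ k, 0 < e k)
    (hsym : ∀ k l, (e k : ℤ) * a k l = (e l : ℤ) * a l k)
    (hp : ∀ m : ℕ, 0 < m → p ^ m ≠ 1)
    (hconst : ∀ k, ∀ μ ∈ (φ₀ k).coeff.support, μ k = 0)
    (hdec : ∀ k, φ k = phiDecomp a (p ^ (e k)) k (φ₀ k))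
    (s t : ι) (hts : t ≠ s)
    (hrel : φ t * φ s = zeta ((p ^ e s)⁻¹) s (φ t) * zeta ((p ^ e t)⁻¹) t (φ s)) :
    ∀ κ ∈ (φ₀ s).coeff.support, a t s ≤ κ t := by
  by_contra hcon
  push_neg at hcon
  obtain ⟨κ₀, hκ₀, hκ₀t⟩ := hcon
  obtain ⟨κ, hκ, hmin⟩ := Finset.exists_min_image (φ₀ s).coeff.support (fun κ => κ t) ⟨κ₀, hκ₀⟩
  have hats : a t s ≤ 0 := hoff t s hts
  have hN : κ t < a t s := lt_of_le_of_lt (hmin κ₀ hκ₀) hκ₀t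
  have key := anchor_sum hdiag hconst hdec t s hrel (κ - alphaV a t)
  have hx2 : κ - alphaV a t + alphaV a t = κ := by abel
  -- first term vanishes
  have hT1 : (φ s).coeff (κ - alphaV a t - alphaV a t) = 0 := by
    refine phi_eq_zero_of hdec s _ ?_ ?_ ?_
    · intro h
      have := congrFun h t
      simp only [Pi.sub_apply, alphaV_apply, hdiag t] at this
      omega
    · intro h
      have := congrFun h t
      simp only [Pi.sub_apply, Pi.neg_apply, alphaV_apply, hdiag t] at this
      omega
    · intro h
      have h1 := hmin _ h
      simp only [Pi.sub_apply, alphaV_apply, hdiag t] at h1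
      omega
  have hS : ∀ μ ∈ (φ₀ t).coeff.support, (φ s).coeff (κ - alphaV a t - μ) = 0 := by
    intro μ hμ
    have hμt : μ t = 0 := hconst t μ hμ
    refine phi_eq_zero_of hdec s _ ?_ ?_ ?_
    · intro h
      have := congrFun h t
      simp only [Pi.sub_apply, alphaV_apply, hdiag t, hμt] at this
      omega
    · intro h
      have := congrFun h t
      simp only [Pi.sub_apply, Pi.neg_apply, alphaV_apply, hdiag t, hμt] at this
      omega
    · intro h
      have h1 := hmin _ h
      simp only [Pi.sub_apply, alphaV_apply, hdiag t, hμt] at h1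
      omega
  rw [hx2] at key
  have hsum0 : ∑ μ ∈ (φ₀ t).coeff.support, (φ₀ t).coeff μ * (φ s).coeff (κ - alphaV a t - μ) *
      (1 - ((p ^ ((e s : ℤ) * μ s + (e t : ℤ) * ((κ - alphaV a t - μ) t)) : ℂˣ) : ℂ)) = 0 := by
    refine Finset.sum_eq_zero fun μ hμ => ?_
    rw [hS μ hμ, mul_zero, zero_mul]
  rw [hT1, hsum0] at key
  simp only [mul_zero, zero_mul, add_zero, zero_add] at key
  have hφκ : (φ s).coeff κ = (φ₀ s).coeff κ := by
    refine phi_coeff_other hdec s κ ?_ ?_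
    · intro h
      have := congrFun h s
      rw [hconst s κ hκ, alphaV_apply, hdiag s] at this
      omega
    · intro h
      have := congrFun h s
      simp only [Pi.neg_apply, alphaV_apply, hdiag s] at this
      rw [hconst s κ hκ] at this
      omega
  have hE : (e s : ℤ) * (-a s t) + (e t : ℤ) * κ t ≠ 0 := by
    have h1 : (0 : ℤ) < (e t : ℤ) := Int.natCast_pos.mpr (he t)
    have h2 : (e s : ℤ) * (-a s t) + (e t : ℤ) * κ t = (e t : ℤ) * (κ t - a t s) := by
      linear_combination -hsym s t
    rw [h2]
    exact ne_of_lt (mul_neg_of_pos_of_neg h1 (by omega))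
  rw [hφκ] at key
  rcases mul_eq_zero.mp key with h | h
  · rcases mul_eq_zero.mp h with h' | h'
    · exact betaM_ne p hp (e t) (he t) h'
    · exact Finsupp.mem_support_iff.mp hκ h'
  · exact one_sub_unit_zpow_ne p hp hE h

end ShiftAux
namespace ShiftAux

variable {ι : Type*} [Fintype ι] [DecidableEq ι]

/-- The key descent lemma: if `j` and `l` are adjacent and some exponent `ν` of `φ₀ j`
has `ν l > a l j` and `ν k₀ > a k₀ j` for some third node `k₀`, we get a contradiction. -/
lemma descent_upper {a : ι → ι → ℤ} {e : ι → ℕ} {p : ℂˣ} {φ φ₀ : ι → LaurentAlg ι}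
    (hdiag : ∀ k, a k k = 2) (hoff : ∀ k l, k ≠ l → a k l ≤ 0)
    (he : ∀ k, 0 < e k)
    (hsym : ∀ k l, (e k : ℤ) * a k l = (e l : ℤ) * a l k)
    (hp : ∀ m : ℕ, 0 < m → p ^ m ≠ 1)
    (hconst : ∀ k, ∀ μ ∈ (φ₀ k).coeff.support, μ k = 0)
    (hdec : ∀ k, φ k = phiDecomp a (p ^ (e k)) k (φ₀ k))
    (hsol2 : ∀ u v, u ≠ v →
      φ u * φ v = zeta ((p ^ e v)⁻¹) v (φ u) * zeta ((p ^ e u)⁻¹) u (φ v))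
    (j l k₀ : ι) (hlj : l ≠ j) (hk₀l : k₀ ≠ l) (hk₀j : k₀ ≠ j)
    (hBj : a j l < 0) :
    ∀ ν ∈ (φ₀ j).coeff.support, a l j < ν l → a k₀ j < ν k₀ → False := by
  have hboxk₀ := box_upper hdiag hoff he hsym hp hconst hdec l k₀ hk₀l (hsol2 k₀ l hk₀l)
  have hboxj := box_upper hdiag hoff he hsym hp hconst hdec l j (Ne.symm hlj) (hsol2 j l (Ne.symm hlj))
  have hboxT := box_lower hdiag hoff he hsym hp hconst hdec j l hlj (hsol2 l j hlj)
  have hrel := hsol2 l j hlj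
  suffices H : ∀ n : ℕ, ∀ ν ∈ (φ₀ j).coeff.support, a l j < ν l → a k₀ j < ν k₀ →
      (ν l - a l j).toNat = n → False by
    exact fun ν hν h1 h2 => H _ ν hν h1 h2 rfl
  intro n
  induction n using Nat.strong_induction_on with
  | _ n IH =>
    intro ν hν hl hk hn
    have hνj : ν j = 0 := hconst j ν hν
    have hal : a k₀ l ≤ 0 := hoff k₀ l hk₀l
    have key := anchor_sum hdiag hconst hdec l j hrel (ν - alphaV a l)
    have hx2 : ν - alphaV a l + alphaV a l = ν := by abel
    rw [hx2] at key
    -- first term vanishes: (φ j).coeff (ν - 2 α_l) = 0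
    have hT1 : (φ j).coeff (ν - alphaV a l - alphaV a l) = 0 := by
      refine phi_eq_zero_of hdec j _ ?_ ?_ ?_
      · intro h
        have := congrFun h k₀
        simp only [Pi.sub_apply, alphaV_apply] at this
        omega
      · intro h
        have := congrFun h j
        simp only [Pi.sub_apply, Pi.neg_apply, alphaV_apply, hdiag j, hνj] at this
        omega
      · intro h
        have := hconst j _ h
        simp only [Pi.sub_apply, alphaV_apply, hνj] at this
        omega
    rw [hT1] at key
    -- main term is nonzero
    have hφν : (φ j).coeff ν = (φ₀ j).coeff ν := by
      refine phi_coeff_other hdec j ν ?_ ?_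
      · intro h
        have := congrFun h j
        rw [hνj, alphaV_apply, hdiag j] at this
        omega
      · intro h
        have := congrFun h j
        simp only [Pi.neg_apply, alphaV_apply, hdiag j, hνj] at this
        omega
    have hE : (e j : ℤ) * (-a j l) + (e l : ℤ) * ν l ≠ 0 := by
      have h1 : (0 : ℤ) < (e l : ℤ) := Int.natCast_pos.mpr (he l)
      have h2 : (e j : ℤ) * (-a j l) + (e l : ℤ) * ν l = (e l : ℤ) * (ν l - a l j) := by
        linear_combination -hsym j l
      rw [h2]
      exact ne_of_gt (mul_pos h1 (by omega))
    have hmain : betaM (p ^ e l) * (φ j).coeff ν *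
        (1 - ((p ^ ((e j : ℤ) * (-a j l) + (e l : ℤ) * ν l) : ℂˣ) : ℂ)) ≠ 0 := by
      rw [hφν]
      exact mul_ne_zero (mul_ne_zero (betaM_ne p hp (e l) (he l))
        (Finsupp.mem_support_iff.mp hν)) (one_sub_unit_zpow_ne p hp hE)
    -- hence the sum over supp (φ₀ l).coeff is nonzero
    have hsumne : ∑ μ ∈ (φ₀ l).coeff.support, (φ₀ l).coeff μ * (φ j).coeff (ν - alphaV a l - μ) *
        (1 - ((p ^ ((e j : ℤ) * μ j + (e l : ℤ) * ((ν - alphaV a l - μ) l)) : ℂˣ) : ℂ)) ≠ 0 := by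
      intro h0
      rw [h0, add_zero] at key
      simp only [mul_zero, zero_mul, zero_add] at key
      exact hmain key
    obtain ⟨μ, hμ, hμne⟩ := Finset.exists_ne_zero_of_sum_ne_zero hsumne
    have hμl : μ l = 0 := hconst l μ hμ
    have hφne : (φ j).coeff (ν - alphaV a l - μ) ≠ 0 := by
      intro h0
      rw [h0] at hμne
      simp at hμne
    have hfac : (1 - ((p ^ ((e j : ℤ) * μ j + (e l : ℤ) * ((ν - alphaV a l - μ) l)) : ℂˣ) : ℂ)) ≠ 0 := by
      intro h0
      rw [h0] at hμne
      simp at hμne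
    -- case analysis on the second factor
    rcases phi_supp_cases hdec j _ hφne with hcase | hcase | hcase
    · -- ν' = α_j : impossible at coordinate k₀
      have h1 := congrFun hcase k₀
      have h2 := hboxk₀ μ hμ
      simp only [Pi.sub_apply, alphaV_apply] at h1
      omega
    · -- ν' = -α_j : impossible at coordinate j
      have h1 := congrFun hcase j
      have h2 := hboxj μ hμ
      simp only [Pi.sub_apply, Pi.neg_apply, alphaV_apply, hdiag j, hνj] at h1
      omega
    · -- ν' ∈ supp φ₀ j : apply induction hypothesis
      set ν' : ι → ℤ := ν - alphaV a l - μ with hν'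
      have hν'j : ν' j = 0 := hconst j ν' hcase
      have hμj : μ j = -a j l := by
        have : ν j - a j l - μ j = 0 := hν'j
        omega
      have hν'l : ν' l = ν l - 2 := by
        simp only [hν', Pi.sub_apply, alphaV_apply, hdiag l, hμl]
        ring
      have hν'k : a k₀ j < ν' k₀ := by
        have h2 := hboxk₀ μ hμ
        simp only [hν', Pi.sub_apply, alphaV_apply]
        omega
      -- the factor being nonzero forces ν' l ≠ a l j
      have hν'lne : ν' l ≠ a l j := by
        intro heq
        apply hfac
        have hexp : (e j : ℤ) * μ j + (e l : ℤ) * ((ν - alphaV a l - μ) l) = 0 := by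
          have h2 : ((ν - alphaV a l - μ) l) = ν' l := rfl
          rw [h2, heq, hμj]
          linear_combination -hsym j l
        rw [hexp]
        simp
      have hν'l2 : a l j < ν' l := lt_of_le_of_ne (hboxT ν' hcase) (Ne.symm hν'lne)
      exact IH ((ν' l - a l j).toNat) (by omega) ν' hcase hν'l2 hν'k rfl

end ShiftAux
namespace ShiftAux

variable {ι : Type*} [Fintype ι] [DecidableEq ι]

/-- Mirror of `descent_upper`. -/
lemma descent_lower {a : ι → ι → ℤ} {e : ι → ℕ} {p : ℂˣ} {φ φ₀ : ι → LaurentAlg ι}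
    (hdiag : ∀ k, a k k = 2) (hoff : ∀ k l, k ≠ l → a k l ≤ 0)
    (he : ∀ k, 0 < e k)
    (hsym : ∀ k l, (e k : ℤ) * a k l = (e l : ℤ) * a l k)
    (hp : ∀ m : ℕ, 0 < m → p ^ m ≠ 1)
    (hconst : ∀ k, ∀ μ ∈ (φ₀ k).coeff.support, μ k = 0)
    (hdec : ∀ k, φ k = phiDecomp a (p ^ (e k)) k (φ₀ k))
    (hsol2 : ∀ u v, u ≠ v →
      φ u * φ v = zeta ((p ^ e v)⁻¹) v (φ u) * zeta ((p ^ e u)⁻¹) u (φ v))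
    (j l k₀ : ι) (hlj : l ≠ j) (hk₀l : k₀ ≠ l) (hk₀j : k₀ ≠ j)
    (hBj : a j l < 0) :
    ∀ ν ∈ (φ₀ j).coeff.support, ν l < -a l j → ν k₀ < -a k₀ j → False := by
  have hboxk₀ := box_lower hdiag hoff he hsym hp hconst hdec l k₀ hk₀l (hsol2 k₀ l hk₀l)
  have hboxj := box_lower hdiag hoff he hsym hp hconst hdec l j (Ne.symm hlj) (hsol2 j l (Ne.symm hlj))
  have hboxT := box_upper hdiag hoff he hsym hp hconst hdec j l hlj (hsol2 l j hlj)
  have hrel := hsol2 l j hlj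
  suffices H : ∀ n : ℕ, ∀ ν ∈ (φ₀ j).coeff.support, ν l < -a l j → ν k₀ < -a k₀ j →
      (-a l j - ν l).toNat = n → False by
    exact fun ν hν h1 h2 => H _ ν hν h1 h2 rfl
  intro n
  induction n using Nat.strong_induction_on with
  | _ n IH =>
    intro ν hν hl hk hn
    have hνj : ν j = 0 := hconst j ν hν
    have hal : a k₀ l ≤ 0 := hoff k₀ l hk₀l
    have key := anchor_sum hdiag hconst hdec l j hrel (ν + alphaV a l)
    have hx1 : ν + alphaV a l - alphaV a l = ν := by abel
    rw [hx1] at key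
    -- second term vanishes: (φ j).coeff (ν + 2 α_l) = 0
    have hT2 : (φ j).coeff (ν + alphaV a l + alphaV a l) = 0 := by
      refine phi_eq_zero_of hdec j _ ?_ ?_ ?_
      · intro h
        have := congrFun h j
        simp only [Pi.add_apply, alphaV_apply, hdiag j, hνj] at this
        omega
      · intro h
        have := congrFun h k₀
        simp only [Pi.add_apply, Pi.neg_apply, alphaV_apply] at this
        omega
      · intro h
        have := hconst j _ h
        simp only [Pi.add_apply, alphaV_apply, hνj] at this
        omega
    rw [hT2] at key
    -- main (first) term is nonzero
    have hφν : (φ j).coeff ν = (φ₀ j).coeff ν := by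
      refine phi_coeff_other hdec j ν ?_ ?_
      · intro h
        have := congrFun h j
        rw [hνj, alphaV_apply, hdiag j] at this
        omega
      · intro h
        have := congrFun h j
        simp only [Pi.neg_apply, alphaV_apply, hdiag j, hνj] at this
        omega
    have hE : (e j : ℤ) * a j l + (e l : ℤ) * ν l ≠ 0 := by
      have h1 : (0 : ℤ) < (e l : ℤ) := Int.natCast_pos.mpr (he l)
      have h2 : (e j : ℤ) * a j l + (e l : ℤ) * ν l = (e l : ℤ) * (a l j + ν l) := by
        linear_combination hsym j l
      rw [h2]
      exact ne_of_lt (mul_neg_of_pos_of_neg h1 (by omega))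
    have hmain : betaP (p ^ e l) * (φ j).coeff ν *
        (1 - ((p ^ ((e j : ℤ) * a j l + (e l : ℤ) * ν l) : ℂˣ) : ℂ)) ≠ 0 := by
      rw [hφν]
      exact mul_ne_zero (mul_ne_zero (betaP_ne p hp (e l) (he l))
        (Finsupp.mem_support_iff.mp hν)) (one_sub_unit_zpow_ne p hp hE)
    have hsumne : ∑ μ ∈ (φ₀ l).coeff.support, (φ₀ l).coeff μ * (φ j).coeff (ν + alphaV a l - μ) *
        (1 - ((p ^ ((e j : ℤ) * μ j + (e l : ℤ) * ((ν + alphaV a l - μ) l)) : ℂˣ) : ℂ)) ≠ 0 := by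
      intro h0
      rw [h0, add_zero] at key
      simp only [mul_zero, zero_mul, add_zero] at key
      exact hmain key
    obtain ⟨μ, hμ, hμne⟩ := Finset.exists_ne_zero_of_sum_ne_zero hsumne
    have hμl : μ l = 0 := hconst l μ hμ
    have hφne : (φ j).coeff (ν + alphaV a l - μ) ≠ 0 := by
      intro h0
      rw [h0] at hμne
      simp at hμne
    have hfac : (1 - ((p ^ ((e j : ℤ) * μ j + (e l : ℤ) * ((ν + alphaV a l - μ) l)) : ℂˣ) : ℂ)) ≠ 0 := by
      intro h0
      rw [h0] at hμne
      simp at hμne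
    rcases phi_supp_cases hdec j _ hφne with hcase | hcase | hcase
    · -- ν' = α_j : impossible at coordinate j
      have h1 := congrFun hcase j
      have h2 := hboxj μ hμ
      simp only [Pi.sub_apply, Pi.add_apply, alphaV_apply, hdiag j, hνj] at h1
      omega
    · -- ν' = -α_j : impossible at coordinate k₀
      have h1 := congrFun hcase k₀
      have h2 := hboxk₀ μ hμ
      simp only [Pi.sub_apply, Pi.add_apply, Pi.neg_apply, alphaV_apply] at h1
      omega
    · -- ν' ∈ supp φ₀ j : apply induction hypothesis
      set ν' : ι → ℤ := ν + alphaV a l - μ with hν'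
      have hν'j : ν' j = 0 := hconst j ν' hcase
      have hμj : μ j = a j l := by
        have : ν j + a j l - μ j = 0 := hν'j
        omega
      have hν'l : ν' l = ν l + 2 := by
        simp only [hν', Pi.sub_apply, Pi.add_apply, alphaV_apply, hdiag l, hμl]
        ring
      have hν'k : ν' k₀ < -a k₀ j := by
        have h2 := hboxk₀ μ hμ
        simp only [hν', Pi.sub_apply, Pi.add_apply, alphaV_apply]
        omega
      have hν'lne : ν' l ≠ -a l j := by
        intro heq
        apply hfac
        have hexp : (e j : ℤ) * μ j + (e l : ℤ) * ((ν + alphaV a l - μ) l) = 0 := by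
          have h2 : ((ν + alphaV a l - μ) l) = ν' l := rfl
          rw [h2, heq, hμj]
          linear_combination hsym j l
        rw [hexp]
        simp
      have hν'l2 : ν' l < -a l j := lt_of_le_of_ne (hboxT ν' hcase) hν'lne
      exact IH ((-a l j - ν' l).toNat) (by omega) ν' hcase hν'l2 hν'k rfl

end ShiftAux

/-- Lemma A.3: let `A` be a symmetrizable GCM with symmetrizer `(e_k)`,
`q_k = p^{e_k}`, and let `(φ_k)` solve the shiftability system, written as
`φ_k = β_k⁺y_k + φ_{k,0} + β_k⁻y_k⁻¹` with `φ_{k,0} ∈ 𝒜_{x_k}`. If the node `j` is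
connected to two distinct other nodes `i` and `l` and `φ_{j,0} ≠ 0`, then every exponent
vector `μ` in the support of `φ_{j,0}` satisfies `μ_i · μ_l ≤ 0`. -/
theorem support_degrees_of_branch_node {ι : Type*} [Fintype ι] [DecidableEq ι]
    (a : ι → ι → ℤ)
    (hdiag : ∀ k, a k k = 2) (hoff : ∀ k l, k ≠ l → a k l ≤ 0)
    (hzero_iff : ∀ k l, a k l = 0 ↔ a l k = 0)
    (e : ι → ℕ) (he : ∀ k, 0 < e k)
    (hsym : ∀ k l, (e k : ℤ) * a k l = (e l : ℤ) * a l k)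
    (p : ℂˣ) (hp : ∀ m : ℕ, 0 < m → p ^ m ≠ 1)
    (φ φ₀ : ι → LaurentAlg ι)
    (hsol : ShiftSystem a (fun k => p ^ (e k)) φ)
    (hdec : ∀ k, φ k = phiDecomp a (p ^ (e k)) k (φ₀ k))
    (hconst : ∀ k, ∀ μ ∈ (φ₀ k).coeff.support, μ k = 0)
    (i j l : ι) (hji : j ≠ i) (hjl : j ≠ l) (hil : i ≠ l)
    (hconn_i : a j i < 0) (hconn_l : a j l < 0)
    (hne : φ₀ j ≠ 0) :
    ∀ μ ∈ (φ₀ j).coeff.support, μ i * μ l ≤ 0 := by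
  intro μ hμ
  by_contra hcon
  push_neg at hcon
  have hsol2 : ∀ u v, u ≠ v →
      φ u * φ v = zeta ((p ^ e v)⁻¹) v (φ u) * zeta ((p ^ e u)⁻¹) u (φ v) :=
    fun u v huv => hsol.2 u v huv
  have hali : a l j < 0 := by
    have h1 : a l j ≤ 0 := hoff l j (Ne.symm hjl)
    have h2 : a l j ≠ 0 := fun h => by
      have := (hzero_iff l j).mp h
      omega
    omega
  have haij : a i j < 0 := by
    have h1 : a i j ≤ 0 := hoff i j (Ne.symm hji)
    have h2 : a i j ≠ 0 := fun h => by
      have := (hzero_iff i j).mp h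
      omega
    omega
  rcases mul_pos_iff.mp hcon with ⟨h1, h2⟩ | ⟨h1, h2⟩
  · exact ShiftAux.descent_upper hdiag hoff he hsym hp hconst hdec hsol2
      j l i (Ne.symm hjl) hil (Ne.symm hji) hconn_l μ hμ (by omega) (by omega)
  · exact ShiftAux.descent_lower hdiag hoff he hsym hp hconst hdec hsol2
      j l i (Ne.symm hjl) hil (Ne.symm hji) hconn_l μ hμ (by omega) (by omega)

end
end

section
/- There exists a unique ℂ-algebra homomorphism ϑ : B_ν → B_ν such that ϑ(a⁺) = −a, ϑ(a) = a⁺, ϑ(k) = ν^{-1}·k⁻ and ϑ(k⁻) = ν·k, and ϑ is bijective (an algebra automorphism of B_ν). -/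
noncomputable section

/-- Generators of the quantized oscillator algebra: `0 ↦ a⁺`, `1 ↦ a`, `2 ↦ k`, `3 ↦ k⁻`. -/
def G : Fin 4 → FreeAlgebra ℂ (Fin 4) := FreeAlgebra.ι ℂ

/-- The defining relations of the quantized oscillator algebra `B_ν`:
`a·a⁺ − ν⁻¹·a⁺·a = k`, `a·a⁺ − ν·a⁺·a = k⁻`, `k·k⁻ = k⁻·k = 1`,
`k·a = ν⁻¹·a·k`, `k·a⁺ = ν·a⁺·k`. -/
inductive OscRel (ν : ℂ) : FreeAlgebra ℂ (Fin 4) → FreeAlgebra ℂ (Fin 4) → Prop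
  | r1 : OscRel ν (G 1 * G 0 - ν⁻¹ • (G 0 * G 1)) (G 2)
  | r2 : OscRel ν (G 1 * G 0 - ν • (G 0 * G 1)) (G 3)
  | r3 : OscRel ν (G 2 * G 3) 1
  | r4 : OscRel ν (G 3 * G 2) 1
  | r5 : OscRel ν (G 2 * G 1) (ν⁻¹ • (G 1 * G 2))
  | r6 : OscRel ν (G 2 * G 0) (ν • (G 0 * G 2))

/-- The quantized oscillator algebra `B_ν`, as the quotient of the free `ℂ`-algebra on
four generators `a⁺, a, k, k⁻` by the defining relations. -/
abbrev Osc (ν : ℂ) := RingQuot (OscRel ν)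

/-- The creation generator `a⁺` of `B_ν`. -/
def ap (ν : ℂ) : Osc ν := RingQuot.mkAlgHom ℂ (OscRel ν) (G 0)

/-- The annihilation generator `a` of `B_ν`. -/
def an (ν : ℂ) : Osc ν := RingQuot.mkAlgHom ℂ (OscRel ν) (G 1)

/-- The generator `k` of `B_ν`. -/
def kk (ν : ℂ) : Osc ν := RingQuot.mkAlgHom ℂ (OscRel ν) (G 2)

/-- The generator `k⁻` (the two-sided inverse of `k`) of `B_ν`. -/
def kinv (ν : ℂ) : Osc ν := RingQuot.mkAlgHom ℂ (OscRel ν) (G 3)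

end

noncomputable section

set_option linter.unusedSectionVars false

namespace OscAux

variable (ν : ℂ)

lemma e1 : an ν * ap ν - ν⁻¹ • (ap ν * an ν) = kk ν := by
  simpa [ap, an, kk] using RingQuot.mkAlgHom_rel ℂ (OscRel.r1 (ν := ν))

lemma e2 : an ν * ap ν - ν • (ap ν * an ν) = kinv ν := by
  simpa [ap, an, kinv] using RingQuot.mkAlgHom_rel ℂ (OscRel.r2 (ν := ν))

lemma e3 : kk ν * kinv ν = 1 := by
  simpa [kk, kinv] using RingQuot.mkAlgHom_rel ℂ (OscRel.r3 (ν := ν))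

lemma e4 : kinv ν * kk ν = 1 := by
  simpa [kk, kinv] using RingQuot.mkAlgHom_rel ℂ (OscRel.r4 (ν := ν))

lemma e5 : kk ν * an ν = ν⁻¹ • (an ν * kk ν) := by
  simpa [kk, an] using RingQuot.mkAlgHom_rel ℂ (OscRel.r5 (ν := ν))

lemma e6 : kk ν * ap ν = ν • (ap ν * kk ν) := by
  simpa [kk, ap] using RingQuot.mkAlgHom_rel ℂ (OscRel.r6 (ν := ν))

/-- The free lift of the map on generators. -/
def F : FreeAlgebra ℂ (Fin 4) →ₐ[ℂ] Osc ν :=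
  FreeAlgebra.lift ℂ ![-an ν, ap ν, ν⁻¹ • kinv ν, ν • kk ν]

variable {ν}

@[simp] lemma F_G0 : F ν (G 0) = -an ν := by simp [F, G]
@[simp] lemma F_G1 : F ν (G 1) = ap ν := by simp [F, G]
@[simp] lemma F_G2 : F ν (G 2) = ν⁻¹ • kinv ν := by simp [F, G]
@[simp] lemma F_G3 : F ν (G 3) = ν • kk ν := by simp [F, G]

variable (hν : ν ≠ 0)
include hν

lemma conj_an : an ν * kinv ν = ν⁻¹ • (kinv ν * an ν) := by
  have h1 : kinv ν * (kk ν * an ν) * kinv ν = an ν * kinv ν := by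
    rw [← mul_assoc, e4, one_mul]
  have h2 : kinv ν * (ν⁻¹ • (an ν * kk ν)) * kinv ν = ν⁻¹ • (kinv ν * an ν) := by
    rw [mul_smul_comm, smul_mul_assoc]
    simp only [mul_assoc]
    rw [e3, mul_one]
  rw [← h1, e5, h2]

lemma conj_ap : ap ν * kinv ν = ν • (kinv ν * ap ν) := by
  have h1 : kinv ν * (kk ν * ap ν) * kinv ν = ap ν * kinv ν := by
    rw [← mul_assoc, e4, one_mul]
  have h2 : kinv ν * (ν • (ap ν * kk ν)) * kinv ν = ν • (kinv ν * ap ν) := by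
    rw [mul_smul_comm, smul_mul_assoc]
    simp only [mul_assoc]
    rw [e3, mul_one]
  rw [← h1, e6, h2]

lemma e5' : kinv ν * an ν = ν • (an ν * kinv ν) := by
  rw [conj_an hν, smul_smul, mul_inv_cancel₀ hν, one_smul]

lemma e6' : kinv ν * ap ν = ν⁻¹ • (ap ν * kinv ν) := by
  rw [conj_ap hν, smul_smul, inv_mul_cancel₀ hν, one_smul]

lemma hrel : ∀ ⦃x y⦄, OscRel ν x y → F ν x = F ν y := by
  intro x y h
  induction h with
  | r1 =>
      simp only [map_sub, map_mul, map_smul, F_G0, F_G1, F_G2]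
      rw [mul_neg (ap ν) (an ν), neg_mul (an ν) (ap ν),
        smul_neg ν⁻¹ (an ν * ap ν), sub_neg_eq_add,
        ← e2 ν, smul_sub, smul_smul, inv_mul_cancel₀ hν, one_smul]
      abel
  | r2 =>
      simp only [map_sub, map_mul, map_smul, F_G0, F_G1, F_G3]
      rw [mul_neg (ap ν) (an ν), neg_mul (an ν) (ap ν),
        smul_neg ν (an ν * ap ν), sub_neg_eq_add,
        ← e1 ν, smul_sub, smul_smul, mul_inv_cancel₀ hν, one_smul]
      abel
  | r3 =>
      simp only [map_mul, F_G2, F_G3, map_one]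
      rw [smul_mul_smul_comm, inv_mul_cancel₀ hν, one_smul, e4]
  | r4 =>
      simp only [map_mul, F_G2, F_G3, map_one]
      rw [smul_mul_smul_comm, mul_inv_cancel₀ hν, one_smul, e3]
  | r5 =>
      simp only [map_mul, map_smul, F_G1, F_G2]
      rw [smul_mul_assoc, mul_smul_comm, e6' hν, smul_smul]
  | r6 =>
      simp only [map_mul, map_smul, F_G0, F_G2]
      rw [smul_mul_assoc, mul_smul_comm,
        mul_neg (kinv ν) (an ν), smul_neg ν⁻¹ (kinv ν * an ν), e5' hν,
        smul_smul, inv_mul_cancel₀ hν, one_smul,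
        neg_mul (an ν) (kinv ν), smul_neg ν⁻¹ (an ν * kinv ν),
        smul_neg ν (ν⁻¹ • (an ν * kinv ν)), smul_smul, mul_inv_cancel₀ hν, one_smul]

/-- The automorphism θ. -/
def theta : Osc ν →ₐ[ℂ] Osc ν :=
  RingQuot.liftAlgHom ℂ ⟨F ν, hrel hν⟩

@[simp] lemma theta_ap : theta hν (ap ν) = -an ν := by
  simp [theta, ap, RingQuot.liftAlgHom_mkAlgHom_apply]
@[simp] lemma theta_an : theta hν (an ν) = ap ν := by
  simp [theta, an, RingQuot.liftAlgHom_mkAlgHom_apply]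
@[simp] lemma theta_kk : theta hν (kk ν) = ν⁻¹ • kinv ν := by
  simp [theta, kk, RingQuot.liftAlgHom_mkAlgHom_apply]
@[simp] lemma theta_kinv : theta hν (kinv ν) = ν • kk ν := by
  simp [theta, kinv, RingQuot.liftAlgHom_mkAlgHom_apply]

omit hν

/-- Extensionality for algebra homs out of `Osc ν`. -/
lemma hom_ext {B : Type} [Semiring B] [Algebra ℂ B] (f g : Osc ν →ₐ[ℂ] B)
    (h0 : f (ap ν) = g (ap ν)) (h1 : f (an ν) = g (an ν))
    (h2 : f (kk ν) = g (kk ν)) (h3 : f (kinv ν) = g (kinv ν)) : f = g := by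
  apply RingQuot.ringQuot_ext'
  apply FreeAlgebra.hom_ext
  funext i
  fin_cases i
  · exact h0
  · exact h1
  · exact h2
  · exact h3

include hν

lemma theta4 :
    ((theta hν).comp (theta hν)).comp ((theta hν).comp (theta hν)) = AlgHom.id ℂ (Osc ν) := by
  apply hom_ext <;>
  simp [smul_smul, inv_mul_cancel₀ hν, mul_inv_cancel₀ hν]

end OscAux

open OscAux in
/-- Lemma 4.4(i): there is a unique `ℂ`-algebra homomorphism
`ϑ : B_ν → B_ν` with `ϑ(a⁺) = −a`, `ϑ(a) = a⁺`, `ϑ(k) = ν⁻¹k⁻`, `ϑ(k⁻) = νk`,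
and it is bijective. -/
theorem osc_involution (ν : ℂ) (hν : ν ≠ 0) :
    ∃ θ : Osc ν →ₐ[ℂ] Osc ν,
      (θ (ap ν) = -an ν ∧ θ (an ν) = ap ν ∧
        θ (kk ν) = ν⁻¹ • kinv ν ∧ θ (kinv ν) = ν • kk ν) ∧
      Function.Bijective θ ∧
      ∀ θ' : Osc ν →ₐ[ℂ] Osc ν,
        (θ' (ap ν) = -an ν ∧ θ' (an ν) = ap ν ∧
          θ' (kk ν) = ν⁻¹ • kinv ν ∧ θ' (kinv ν) = ν • kk ν) → θ' = θ := by
  refine ⟨theta hν, ⟨theta_ap hν, theta_an hν, theta_kk hν, theta_kinv hν⟩, ?_, ?_⟩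
  · have h4 := theta4 hν
    refine Function.bijective_iff_has_inverse.2
      ⟨(theta hν).comp ((theta hν).comp (theta hν)), ?_, ?_⟩
    · intro x
      have := AlgHom.congr_fun h4 x
      simpa [AlgHom.comp_apply] using this
    · intro x
      have := AlgHom.congr_fun h4 x
      simpa [AlgHom.comp_apply] using this
  · rintro θ' ⟨h0, h1, h2, h3⟩
    exact hom_ext θ' (theta hν) (by simp [h0]) (by simp [h1]) (by simp [h2]) (by simp [h3])

end
end
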